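/- Let G be a finite n-vertex graph. Suppose that for every induced subgraph H of G on at least one vertex, there exists a set S ⊆ V(H) with |S| ≥ |V(H)|/2 such that every connected component of H[S] has diameter at most D. Then there exists a partition of V(G) into at most ⌈log₂ n⌉ + 1 color classes such that for each color class, every connected component of the subgraph induced by that class has diameter at most D. -/

import Mathlib

theorem network_decomposition_from_clustering {V : Type*} [Fintype V] [Nonempty V]
    (G : SimpleGraph V) (D : ℕ)
    (hcluster : ∀ W : Set V, W.Nonempty → ∃ S : Set V, S ⊆ W ∧
      2 * S.ncard ≥ W.ncard ∧
      ∀ u v : S, (G.induce S).Reachable u v → (G.induce S).dist u v ≤ D) :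
    ∃ col : V → ℕ,
      (∀ v, col v < Nat.clog 2 (Fintype.card V) + 1) ∧
      ∀ c : ℕ, ∀ u v : {x : V // col x = c},
        (G.induce {x : V | col x = c}).Reachable ⟨u, u.2⟩ ⟨v, v.2⟩ →
        (G.induce {x : V | col x = c}).dist ⟨u, u.2⟩ ⟨v, v.2⟩ ≤ D := by
  classical
  set n := Fintype.card V with hn
  -- cluster choice function
  let F : Set V → Set V := fun W => if h : W.Nonempty then (hcluster W h).choose else ∅
  have hFpos : ∀ W : Set V, ∀ h : W.Nonempty, F W = (hcluster W h).choose := by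
    intro W h; simp only [F, dif_pos h]
  have hFneg : ∀ W : Set V, ¬ W.Nonempty → F W = ∅ := by
    intro W h; simp only [F, dif_neg h]
  have hFsub : ∀ W, F W ⊆ W := by
    intro W
    by_cases h : W.Nonempty
    · rw [hFpos W h]; exact (hcluster W h).choose_spec.1
    · rw [hFneg W h]; exact Set.empty_subset _
  have hFcard : ∀ W : Set V, 2 * (F W).ncard ≥ W.ncard := by
    intro W
    by_cases h : W.Nonempty
    · rw [hFpos W h]; exact (hcluster W h).choose_spec.2.1
    · rw [hFneg W h, Set.not_nonempty_iff_eq_empty.mp h]; simp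
  have hFdiam : ∀ W : Set V, ∀ u v : (F W : Set V),
      (G.induce (F W)).Reachable u v → (G.induce (F W)).dist u v ≤ D := by
    intro W
    by_cases h : W.Nonempty
    · rw [hFpos W h]; exact (hcluster W h).choose_spec.2.2
    · rw [hFneg W h]; intro u; exact absurd u.2 (Set.notMem_empty _)
  -- the sequence of remaining vertex sets
  let Wseq : ℕ → Set V := fun k => Nat.rec Set.univ (fun _ W => W \ F W) k
  have hWsucc : ∀ k, Wseq (k + 1) = Wseq k \ F (Wseq k) := fun _ => rfl
  have hstep : ∀ k, 2 * (Wseq (k + 1)).ncard ≤ (Wseq k).ncard := by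
    intro k
    rw [hWsucc]
    have hdcard : (Wseq k \ F (Wseq k)).ncard = (Wseq k).ncard - (F (Wseq k)).ncard :=
      Set.ncard_diff (hFsub _) (Set.finite_univ.subset (Set.subset_univ _))
    have h1 := hFcard (Wseq k)
    have h2 : (F (Wseq k)).ncard ≤ (Wseq k).ncard :=
      Set.ncard_le_ncard (hFsub _) (Set.finite_univ.subset (Set.subset_univ _))
    omega
  have hpow : ∀ k, 2 ^ k * (Wseq k).ncard ≤ n := by
    intro k
    induction k with
    | zero =>
      simp only [pow_zero, one_mul]
      have : (Wseq 0 : Set V) = Set.univ := rfl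
      rw [this, Set.ncard_univ, hn, Nat.card_eq_fintype_card]
    | succ k ih =>
      calc 2 ^ (k + 1) * (Wseq (k + 1)).ncard = 2 ^ k * (2 * (Wseq (k + 1)).ncard) := by ring
        _ ≤ 2 ^ k * (Wseq k).ncard := Nat.mul_le_mul_left _ (hstep k)
        _ ≤ n := ih
  have hempty : Wseq (Nat.clog 2 n + 1) = ∅ := by
    have h1 : n ≤ 2 ^ Nat.clog 2 n := Nat.le_pow_clog one_lt_two n
    have h2 := hpow (Nat.clog 2 n)
    have h3 : 0 < 2 ^ Nat.clog 2 n := Nat.pow_pos (by norm_num)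
    have h4 : (Wseq (Nat.clog 2 n)).ncard ≤ 1 := by
      by_contra h
      push_neg at h
      nlinarith
    have h5 := hstep (Nat.clog 2 n)
    have h6 : (Wseq (Nat.clog 2 n + 1)).ncard = 0 := by omega
    exact (Set.ncard_eq_zero (Set.finite_univ.subset (Set.subset_univ _))).mp h6
  have hex : ∀ v : V, ∃ k, v ∉ Wseq (k + 1) := by
    intro v
    exact ⟨Nat.clog 2 n, by rw [hempty]; exact Set.notMem_empty v⟩
  haveI : ∀ v : V, DecidablePred fun k => v ∉ Wseq (k + 1) := fun v k => Classical.dec _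
  let col : V → ℕ := fun v => Nat.find (hex v)
  have hmono : ∀ j k : ℕ, j ≤ k → Wseq k ⊆ Wseq j := by
    intro j k h
    induction h with
    | refl => exact le_refl _
    | step _ ih => exact Set.Subset.trans (by rw [hWsucc]; exact Set.diff_subset) ih
  have hclass : ∀ c : ℕ, {x : V | col x = c} = F (Wseq c) := by
    intro c
    ext x
    simp only [Set.mem_setOf_eq, col, Nat.find_eq_iff]
    constructor
    · rintro ⟨h1, h2⟩
      have hxc : x ∈ Wseq c := by
        cases c with
        | zero => exact Set.mem_univ x
        | succ m =>
          have := h2 m (Nat.lt_succ_self m)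
          exact not_not.mp this
      rw [hWsucc] at h1
      by_contra hF
      exact h1 ⟨hxc, hF⟩
    · intro hF
      have hxc : x ∈ Wseq c := hFsub _ hF
      constructor
      · rw [hWsucc]; exact fun h => h.2 hF
      · intro k hk h
        exact h (hmono (k + 1) c hk hxc)
  have key : ∀ (A B : Set V), A = B →
      (∀ u v : B, (G.induce B).Reachable u v → (G.induce B).dist u v ≤ D) →
      ∀ u v : A, (G.induce A).Reachable u v → (G.induce A).dist u v ≤ D := by
    rintro A B rfl h
    exact h
  refine ⟨col, ?_, ?_⟩
  · intro v
    have : col v ≤ Nat.clog 2 n := Nat.find_le (by rw [hempty]; exact Set.notMem_empty v)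
    omega
  · intro c u v
    exact key _ _ (hclass c) (hFdiam (Wseq c)) ⟨u, u.2⟩ ⟨v, v.2⟩
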